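/- Σ_{n=1}^∞ (-1)^{n-1} / ((2n−1)^2(2n+1)^2(2n+3)^2(2n+5)^2(2n+7)^2) = (3!!)^3·2!/((4!)^4·2^2) · G − 3919/108380160, where G is Catalan's constant and 3!! = 3. -/

import Mathlib

open Real Filter Finset Topology

private lemma base_summable : Summable (fun n : ℕ => (1 : ℝ) / ((n : ℝ) + 1) ^ 2) := by
  have h := (summable_nat_add_iff 1).mpr (summable_one_div_nat_pow.mpr one_lt_two)
  refine h.congr fun n => ?_
  push_cast
  ring

private lemma f_summable : Summable (fun n : ℕ => (-1 : ℝ) ^ n / (2 * (n : ℝ) + 1) ^ 2) := by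
  refine Summable.of_norm_bounded base_summable fun n => ?_
  have h1 : (0 : ℝ) < 2 * (n : ℝ) + 1 := by positivity
  rw [norm_div, norm_pow, norm_neg, norm_one, one_pow, norm_pow, Real.norm_eq_abs,
    abs_of_pos h1]
  gcongr
  all_goals nlinarith [Nat.cast_nonneg (α := ℝ) n]

/-- telescoping sums of `h n - h (n + k)` -/
private lemma tele_hasSum {h : ℕ → ℝ} (k : ℕ) (h0 : Tendsto h atTop (𝓝 0))
    (hs : Summable (fun n => h n - h (n + k))) :
    HasSum (fun n => h n - h (n + k)) (∑ i ∈ Finset.range k, h i) := by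
  rw [hs.hasSum_iff_tendsto_nat]
  have key : ∀ N : ℕ, ∑ n ∈ Finset.range N, (h n - h (n + k)) =
      ∑ i ∈ Finset.range k, h i - ∑ j ∈ Finset.range k, h (N + j) := by
    intro N
    rw [Finset.sum_sub_distrib]
    have e1 : ∑ n ∈ Finset.range N, h (n + k) =
        ∑ i ∈ Finset.range (k + N), h i - ∑ i ∈ Finset.range k, h i := by
      rw [Finset.sum_range_add]
      simp [add_comm]
    have e2 : ∑ i ∈ Finset.range (k + N), h i =
        ∑ i ∈ Finset.range N, h i + ∑ j ∈ Finset.range k, h (N + j) := by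
      rw [add_comm k N, Finset.sum_range_add]
    rw [e1, e2]
    ring
  simp only [key]
  have hlim : Tendsto (fun N : ℕ => ∑ j ∈ Finset.range k, h (N + j)) atTop (𝓝 0) := by
    have hj : ∀ j ∈ Finset.range k, Tendsto (fun N : ℕ => h (N + j)) atTop (𝓝 0) := by
      intro j _
      exact h0.comp (tendsto_add_atTop_nat j)
    have := tendsto_finset_sum (Finset.range k) hj
    simpa using this
  simpa using (tendsto_const_nhds.sub hlim)

private lemma alt_tendsto (c : ℝ) (hc : 1 ≤ c) :
    Tendsto (fun n : ℕ => (-1 : ℝ) ^ n / (2 * (n : ℝ) + c)) atTop (𝓝 0) := by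
  refine squeeze_zero_norm (fun n => ?_) tendsto_one_div_add_atTop_nhds_zero_nat
  have h1 : (0 : ℝ) < 2 * (n : ℝ) + c := by positivity
  rw [norm_div, norm_pow, norm_neg, norm_one, one_pow, Real.norm_eq_abs, abs_of_pos h1]
  gcongr
  all_goals nlinarith [Nat.cast_nonneg (α := ℝ) n]

theorem sum_alt_five_odd_squares (G : ℝ)
    (hG : G = ∑' n : ℕ, (-1 : ℝ) ^ n / (2 * (n : ℝ) + 1) ^ 2) :
    ∑' n : ℕ, (-1 : ℝ) ^ n /
        ((2 * (n : ℝ) + 1) ^ 2 * (2 * (n : ℝ) + 3) ^ 2 * (2 * (n : ℝ) + 5) ^ 2 *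
          (2 * (n : ℝ) + 7) ^ 2 * (2 * (n : ℝ) + 9) ^ 2) =
      ((3 : ℝ) ^ 3 * (Nat.factorial 2 : ℝ)) / ((Nat.factorial 4 : ℝ) ^ 4 * 2 ^ 2) * G -
        3919 / 108380160 := by
  set f : ℕ → ℝ := fun n => (-1 : ℝ) ^ n / (2 * (n : ℝ) + 1) ^ 2 with hf
  have hfG : HasSum f G := by rw [hG]; exact f_summable.hasSum
  have hshift : ∀ k : ℕ, HasSum (fun n => f (n + k)) (G - ∑ i ∈ Finset.range k, f i) := by
    intro k
    rw [hasSum_nat_add_iff k]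
    simpa using hfG
  -- telescoping series 1 : h1 n = (-1)^n/(2n+1), shift 4
  set h1 : ℕ → ℝ := fun n => (-1 : ℝ) ^ n / (2 * (n : ℝ) + 1) with hh1
  have h1sum : Summable (fun n => h1 n - h1 (n + 4)) := by
    refine Summable.of_norm_bounded (base_summable.mul_left 8) fun n => ?_
    have e : h1 n - h1 (n + 4) = (-1 : ℝ) ^ n * (8 / ((2 * (n : ℝ) + 1) * (2 * (n : ℝ) + 9))) := by
      simp only [hh1]
      have d1 : (2 * (n : ℝ) + 1) ≠ 0 := by positivity
      have d2 : (2 * ((n : ℝ) + 4) + 1) ≠ 0 := by positivity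
      push_cast
      simp only [pow_add]
      field_simp
      ring
    rw [e, norm_mul, norm_pow, norm_neg, norm_one, one_pow, one_mul, norm_div,
      Real.norm_eq_abs, Real.norm_eq_abs, abs_of_pos (by positivity : (0:ℝ) < 8),
      abs_of_pos (by positivity : (0:ℝ) < (2 * (n : ℝ) + 1) * (2 * (n : ℝ) + 9)),
      mul_one_div, sq]
    gcongr
    all_goals nlinarith [Nat.cast_nonneg (α := ℝ) n]
  have h1has : HasSum (fun n => h1 n - h1 (n + 4)) (76 / 105) := by
    have ht := tele_hasSum 4 (by simpa [hh1] using alt_tendsto 1 le_rfl) h1sum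
    have hv : ∑ i ∈ Finset.range 4, h1 i = 76 / 105 := by
      norm_num [hh1, Finset.sum_range_succ]
    rwa [hv] at ht
  -- telescoping series 2 : h3 n = (-1)^n/(2n+3), shift 2
  set h3 : ℕ → ℝ := fun n => (-1 : ℝ) ^ n / (2 * (n : ℝ) + 3) with hh3
  have h3sum : Summable (fun n => h3 n - h3 (n + 2)) := by
    refine Summable.of_norm_bounded (base_summable.mul_left 4) fun n => ?_
    have e : h3 n - h3 (n + 2) = (-1 : ℝ) ^ n * (4 / ((2 * (n : ℝ) + 3) * (2 * (n : ℝ) + 7))) := by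
      simp only [hh3]
      have d1 : (2 * (n : ℝ) + 3) ≠ 0 := by positivity
      have d2 : (2 * ((n : ℝ) + 2) + 3) ≠ 0 := by positivity
      push_cast
      simp only [pow_add]
      field_simp
      ring
    rw [e, norm_mul, norm_pow, norm_neg, norm_one, one_pow, one_mul, norm_div,
      Real.norm_eq_abs, Real.norm_eq_abs, abs_of_pos (by positivity : (0:ℝ) < 4),
      abs_of_pos (by positivity : (0:ℝ) < (2 * (n : ℝ) + 3) * (2 * (n : ℝ) + 7)),
      mul_one_div, sq]
    gcongr
    all_goals nlinarith [Nat.cast_nonneg (α := ℝ) n]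
  have h3has : HasSum (fun n => h3 n - h3 (n + 2)) (2 / 15) := by
    have ht := tele_hasSum 2 (by simpa [hh3] using alt_tendsto 3 (by norm_num)) h3sum
    have hv : ∑ i ∈ Finset.range 2, h3 i = 2 / 15 := by
      norm_num [hh3, Finset.sum_range_succ]
    rwa [hv] at ht
  -- the big combination
  have H : HasSum
      (fun n => (1/147456 : ℝ) * f n + (-1/9216 : ℝ) * f (n + 1) + (1/4096 : ℝ) * f (n + 2)
        + (-1/9216 : ℝ) * f (n + 3) + (1/147456 : ℝ) * f (n + 4)
        + (-25/1769472 : ℝ) * (h1 n - h1 (n + 4)) + (-5/55296 : ℝ) * (h3 n - h3 (n + 2)))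
      ((1/147456 : ℝ) * G + (-1/9216 : ℝ) * (G - ∑ i ∈ Finset.range 1, f i)
        + (1/4096 : ℝ) * (G - ∑ i ∈ Finset.range 2, f i)
        + (-1/9216 : ℝ) * (G - ∑ i ∈ Finset.range 3, f i)
        + (1/147456 : ℝ) * (G - ∑ i ∈ Finset.range 4, f i)
        + (-25/1769472 : ℝ) * (76/105) + (-5/55296 : ℝ) * (2/15)) :=
    (((((((hfG.mul_left _).add ((hshift 1).mul_left _)).add
      ((hshift 2).mul_left _)).add ((hshift 3).mul_left _)).add
      ((hshift 4).mul_left _)).add (h1has.mul_left _)).add (h3has.mul_left _))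
  have Heq : (fun n : ℕ => (-1 : ℝ) ^ n /
        ((2 * (n : ℝ) + 1) ^ 2 * (2 * (n : ℝ) + 3) ^ 2 * (2 * (n : ℝ) + 5) ^ 2 *
          (2 * (n : ℝ) + 7) ^ 2 * (2 * (n : ℝ) + 9) ^ 2)) =
      (fun n => (1/147456 : ℝ) * f n + (-1/9216 : ℝ) * f (n + 1) + (1/4096 : ℝ) * f (n + 2)
        + (-1/9216 : ℝ) * f (n + 3) + (1/147456 : ℝ) * f (n + 4)
        + (-25/1769472 : ℝ) * (h1 n - h1 (n + 4)) + (-5/55296 : ℝ) * (h3 n - h3 (n + 2))) := by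
    funext n
    simp only [hf, hh1, hh3]
    have d1 : (2 * (n : ℝ) + 1) ≠ 0 := by positivity
    have d3 : (2 * (n : ℝ) + 3) ≠ 0 := by positivity
    have d5 : (2 * (n : ℝ) + 5) ≠ 0 := by positivity
    have d7 : (2 * (n : ℝ) + 7) ≠ 0 := by positivity
    have d9 : (2 * (n : ℝ) + 9) ≠ 0 := by positivity
    push_cast
    simp only [pow_add]
    field_simp
    ring
  rw [Heq, H.tsum_eq]
  simp only [hf, Finset.sum_range_succ, Finset.sum_range_zero]
  norm_num [Nat.factorial]
  ring_nf
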